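/- Online mirror descent regret bound for linear losses: let h : ℝ^m → ℝ be differentiable and σ-strongly convex with respect to the ℓ1-norm on the nonnegative orthant (σ > 0), with Bregman divergence V_h(u,v) = h(u) − h(v) − ∇h(v)·(u − v); let η > 0, G ≥ 0, and n a positive integer. Let φ_1,…,φ_n ∈ ℝ^m satisfy ‖φ_t‖_∞ ≤ G, let μ_1 ∈ ℝ^m with μ_1 ≥ 0 componentwise, and for each t ∈ {1,…,n} suppose μ_{t+1} minimizes μ ↦ φ_t·μ + (1/η)·V_h(μ, μ_t) over {μ ∈ ℝ^m : μ ≥ 0 componentwise}. Then for every μ ∈ ℝ^m with μ ≥ 0 componentwise: Σ_{t=1}^{n} φ_t·(μ_t − μ) ≤ G²·η·n/(2σ) + V_h(μ, μ_1)/η. -/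

import Mathlib

open Finset

lemma slope_aux8 {C D : ℝ} {g : ℝ → ℝ} (hg : HasDerivAt g D 0)
    (hpos : ∀ ε : ℝ, ε ∈ Set.Ioc (0:ℝ) 1 → 0 ≤ C + (g ε - g 0) / ε) :
    0 ≤ C + D := by
  have h1 : Filter.Tendsto (fun ε => C + slope g 0 ε) (nhdsWithin 0 (Set.Ioi 0)) (nhds (C + D)) := by
    apply Filter.Tendsto.const_add
    exact (hasDerivAt_iff_tendsto_slope.mp hg).mono_left
      (nhdsWithin_mono _ (fun x hx => ne_of_gt hx))
  refine ge_of_tendsto h1 ?_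
  filter_upwards [Ioc_mem_nhdsGT (by norm_num : (0:ℝ) < 1)] with ε hε
  have := hpos ε hε
  simpa [slope_def_field, sub_zero] using this

/-- Online mirror descent regret bound for linear losses. -/
theorem stmt8
    (m n : ℕ) (hn : 0 < n)
    (h : (Fin m → ℝ) → ℝ) (h' : (Fin m → ℝ) → (Fin m → ℝ)) (σ : ℝ) (hσ : 0 < σ)
    (hdiff : ∀ v, HasFDerivAt h
      (∑ j, h' v j • (ContinuousLinearMap.proj j : (Fin m → ℝ) →L[ℝ] ℝ)) v)
    (hstrong : ∀ u v : Fin m → ℝ, (∀ j, 0 ≤ u j) → (∀ j, 0 ≤ v j) →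
      h v + (∑ j, h' v j * (u j - v j)) + σ / 2 * (∑ j, |u j - v j|) ^ 2 ≤ h u)
    (V : (Fin m → ℝ) → (Fin m → ℝ) → ℝ)
    (hV : ∀ u v, V u v = h u - h v - ∑ j, h' v j * (u j - v j))
    (η : ℝ) (hη : 0 < η) (G : ℝ) (hG : 0 ≤ G)
    (φ : Fin n → Fin m → ℝ) (hφ : ∀ t j, |φ t j| ≤ G)
    (μ : Fin (n + 1) → Fin m → ℝ) (hμpos : ∀ s j, 0 ≤ μ s j)
    (hMD : ∀ t : Fin n, ∀ ν : Fin m → ℝ, (∀ j, 0 ≤ ν j) →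
      (∑ j, φ t j * μ t.succ j) + (1 / η) * V (μ t.succ) (μ t.castSucc) ≤
        (∑ j, φ t j * ν j) + (1 / η) * V ν (μ t.castSucc)) :
    ∀ ν : Fin m → ℝ, (∀ j, 0 ≤ ν j) →
      ∑ t, ∑ j, φ t j * (μ t.castSucc j - ν j) ≤
        G ^ 2 * η * n / (2 * σ) + V ν (μ 0) / η := by
  intro ν hν
  -- nonnegativity of V on the orthant
  have hVnn : ∀ u v : Fin m → ℝ, (∀ j, 0 ≤ u j) → (∀ j, 0 ≤ v j) →
      σ / 2 * (∑ j, |u j - v j|) ^ 2 ≤ V u v := by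
    intro u v hu hv
    have := hstrong u v hu hv
    rw [hV]; linarith
  -- per step bound
  have hstep : ∀ t : Fin n,
      ∑ j, φ t j * (μ t.castSucc j - ν j) ≤
        G ^ 2 * η / (2 * σ) + (1 / η) * (V ν (μ t.castSucc) - V ν (μ t.succ)) := by
    intro t
    set p : Fin m → ℝ := μ t.castSucc with hp
    set q : Fin m → ℝ := μ t.succ with hq
    set d : Fin m → ℝ := fun j => ν j - q j with hd
    -- derivative of ε ↦ h (q + ε • d)
    have hgd : HasDerivAt (fun ε : ℝ => h (q + ε • d)) (∑ j, h' q j * d j) 0 := by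
      have hline : HasDerivAt (fun ε : ℝ => q + ε • d) d 0 := by
        have := ((hasDerivAt_id (0:ℝ)).smul_const d).const_add q
        simpa using this
      have h0 : q + (0:ℝ) • d = q := by simp
      have hcomp := (hdiff (q + (0:ℝ) • d)).comp_hasDerivAt 0 hline
      rw [h0] at hcomp
      simpa [ContinuousLinearMap.sum_apply, ContinuousLinearMap.smul_apply,
        ContinuousLinearMap.proj_apply, smul_eq_mul, Function.comp_def] using hcomp
    set C : ℝ := (∑ j, φ t j * d j) - (1 / η) * ∑ j, h' p j * d j with hC
    set g : ℝ → ℝ := fun ε => (1 / η) * h (q + ε • d) with hg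
    have hopt : 0 ≤ C + (1 / η) * ∑ j, h' q j * d j := by
      refine slope_aux8 (hgd.const_mul (1 / η)) ?_
      intro ε hε
      obtain ⟨hε0, hε1⟩ := hε
      have hfeas : ∀ j, 0 ≤ (q + ε • d) j := by
        intro j
        have h1 := hμpos t.succ j
        have h2 := hν j
        simp only [Pi.add_apply, Pi.smul_apply, smul_eq_mul, hd]
        nlinarith
      have hM := hMD t (q + ε • d) hfeas
      rw [hV (q + ε • d) p, hV q p] at hM
      have e0 : ∑ j, φ t j * μ t.succ j = ∑ j, φ t j * q j := rfl
      rw [e0] at hM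
      have e1 : ∑ j, φ t j * (q + ε • d) j
          = (∑ j, φ t j * q j) + ε * ∑ j, φ t j * d j := by
        rw [mul_sum, ← sum_add_distrib]
        refine sum_congr rfl fun j _ => ?_
        simp only [Pi.add_apply, Pi.smul_apply, smul_eq_mul]; ring
      have e2 : ∑ j, h' p j * ((q + ε • d) j - p j)
          = (∑ j, h' p j * (q j - p j)) + ε * ∑ j, h' p j * d j := by
        rw [mul_sum, ← sum_add_distrib]
        refine sum_congr rfl fun j _ => ?_
        simp only [Pi.add_apply, Pi.smul_apply, smul_eq_mul]; ring
      rw [e1, e2] at hM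
      have hkey : 0 ≤ C + (g ε - g 0) / ε := by
        have hg0 : g 0 = 1 / η * h q := by simp [hg]
        rw [hg0]
        simp only [hg, hC]
        have hXeq : (∑ j, φ t j * d j) - 1 / η * ∑ j, h' p j * d j
              + (1 / η * h (q + ε • d) - 1 / η * h q) / ε
            = (ε * ((∑ j, φ t j * d j) - 1 / η * ∑ j, h' p j * d j)
              + (1 / η * h (q + ε • d) - 1 / η * h q)) / ε := by
          field_simp
        rw [hXeq]
        apply div_nonneg _ hε0.le
        nlinarith [hM]
      exact hkey
    -- three-point identity
    have h3 : V ν p - V ν q - V q p = (∑ j, h' q j * d j) - ∑ j, h' p j * d j := by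
      rw [hV ν p, hV ν q, hV q p]
      have e3 : (∑ j, h' p j * (q j - p j)) - ∑ j, h' p j * (ν j - p j)
          = -∑ j, h' p j * d j := by
        rw [← sum_sub_distrib, ← sum_neg_distrib]
        refine sum_congr rfl fun j _ => ?_
        simp only [hd]; ring
      have e4 : (∑ j, h' q j * (ν j - q j)) = ∑ j, h' q j * d j := by
        refine sum_congr rfl fun j _ => ?_
        simp only [hd]
      linarith
    -- prox inequality
    have hprox : ∑ j, φ t j * (q j - ν j) ≤ (1 / η) * (V ν p - V ν q - V q p) := by
      have e5 : ∑ j, φ t j * (q j - ν j) = -∑ j, φ t j * d j := by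
        rw [← sum_neg_distrib]
        refine sum_congr rfl fun j _ => ?_
        simp only [hd]; ring
      rw [e5, h3]
      simp only [hC] at hopt
      have : (1 / η) * ((∑ j, h' q j * d j) - ∑ j, h' p j * d j)
          = (1 / η) * ∑ j, h' q j * d j - (1 / η) * ∑ j, h' p j * d j := by ring
      linarith [this]
    -- movement bound
    set s : ℝ := ∑ j, |q j - p j| with hs
    have hsnn : 0 ≤ s := sum_nonneg fun j _ => abs_nonneg _
    have hmove : ∑ j, φ t j * (p j - q j) ≤ G * s := by
      rw [hs, mul_sum]
      refine sum_le_sum fun j _ => ?_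
      have h1 : φ t j * (p j - q j) ≤ |φ t j| * |p j - q j| := by
        calc φ t j * (p j - q j) ≤ |φ t j * (p j - q j)| := le_abs_self _
          _ = |φ t j| * |p j - q j| := abs_mul _ _
      have h2 : |φ t j| * |p j - q j| ≤ G * |p j - q j| :=
        mul_le_mul_of_nonneg_right (hφ t j) (abs_nonneg _)
      rw [abs_sub_comm (q j) (p j)]
      linarith
    have hVqp : σ / 2 * s ^ 2 ≤ V q p := hVnn q p (hμpos _) (hμpos _)
    have hamgm : G * s - (1 / η) * (σ / 2 * s ^ 2) ≤ G ^ 2 * η / (2 * σ) := by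
      rw [le_div_iff₀ (by positivity : (0:ℝ) < 2 * σ), sub_mul]
      have e6 : (1 / η) * (σ / 2 * s ^ 2) * (2 * σ) = σ ^ 2 * s ^ 2 / η := by
        field_simp
      rw [e6]
      rw [← sub_nonneg]
      have : G ^ 2 * η - (G * s * (2 * σ) - σ ^ 2 * s ^ 2 / η) = (G * η - σ * s) ^ 2 / η := by
        field_simp; ring
      rw [this]
      positivity
    have decomp : ∑ j, φ t j * (p j - ν j)
        = (∑ j, φ t j * (p j - q j)) + ∑ j, φ t j * (q j - ν j) := by
      rw [← sum_add_distrib]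
      refine sum_congr rfl fun j _ => ?_
      ring
    rw [decomp]
    have : (1 / η) * (V ν p - V ν q - V q p)
        = (1 / η) * (V ν p - V ν q) - (1 / η) * V q p := by ring
    have hV1 : (1 / η) * (σ / 2 * s ^ 2) ≤ (1 / η) * V q p :=
      mul_le_mul_of_nonneg_left hVqp (by positivity)
    linarith
  -- sum the per-step bounds
  have hsum : ∑ t, ∑ j, φ t j * (μ t.castSucc j - ν j) ≤
      ∑ t : Fin n, (G ^ 2 * η / (2 * σ) + (1 / η) * (V ν (μ t.castSucc) - V ν (μ t.succ))) :=
    sum_le_sum fun t _ => hstep t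
  -- telescoping
  set W : Fin (n + 1) → ℝ := fun i => V ν (μ i) with hW
  open Fin.NatCast in
  have htel : ∑ t : Fin n, (V ν (μ t.castSucc) - V ν (μ t.succ)) = W 0 - W (Fin.last n) := by
    set w : ℕ → ℝ := fun i => W (i : Fin (n+1)) with hw
    have hcast : ∀ t : Fin n, (t.castSucc : Fin (n+1)) = ((t : ℕ) : Fin (n+1)) := by
      intro t
      ext
      simp [Fin.val_natCast, Nat.mod_eq_of_lt (lt_trans t.isLt (Nat.lt_succ_self n))]
    have hsucc : ∀ t : Fin n, (t.succ : Fin (n+1)) = (((t : ℕ) + 1 : ℕ) : Fin (n+1)) := by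
      intro t
      ext
      simp [Fin.val_natCast, Nat.mod_eq_of_lt (Nat.succ_lt_succ t.isLt)]
    have hlastn : ((n : ℕ) : Fin (n+1)) = Fin.last n := by
      ext
      simp [Fin.val_natCast, Nat.mod_eq_of_lt (Nat.lt_succ_self n)]
    calc ∑ t : Fin n, (V ν (μ t.castSucc) - V ν (μ t.succ))
        = ∑ t : Fin n, (w (t : ℕ) - w ((t : ℕ) + 1)) := by
          refine sum_congr rfl fun t _ => ?_
          simp only [hw, hW]
          rw [hcast t, hsucc t]
      _ = ∑ i ∈ range n, (w i - w (i + 1)) :=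
          Fin.sum_univ_eq_sum_range (fun i => w i - w (i + 1)) n
      _ = w 0 - w n := Finset.sum_range_sub' w n
      _ = W 0 - W (Fin.last n) := by
          simp only [hw, Nat.cast_zero, hlastn]
  have hWlast : 0 ≤ W (Fin.last n) := by
    refine le_trans ?_ (hVnn ν (μ (Fin.last n)) hν (hμpos _))
    positivity
  have hfinal : ∑ t : Fin n, (G ^ 2 * η / (2 * σ) + (1 / η) * (V ν (μ t.castSucc) - V ν (μ t.succ)))
      = n * (G ^ 2 * η / (2 * σ)) + (1 / η) * (W 0 - W (Fin.last n)) := by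
    rw [sum_add_distrib, sum_const, ← mul_sum, htel]
    simp [nsmul_eq_mul]
  rw [hfinal] at hsum
  have e7 : (n : ℝ) * (G ^ 2 * η / (2 * σ)) = G ^ 2 * η * n / (2 * σ) := by ring
  have e8 : (1 / η) * (W 0 - W (Fin.last n)) ≤ W 0 / η := by
    have : (1 / η) * (W 0 - W (Fin.last n)) = W 0 / η - W (Fin.last n) / η := by ring
    rw [this]
    have : 0 ≤ W (Fin.last n) / η := by positivity
    linarith
  have : W 0 = V ν (μ 0) := rfl
  rw [e7] at hsum
  linarith
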